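/- For all real Y₁, Y₂, Z, the matrix identity X_{Y₂} · L · X_Z · F · X_Z · L · X_{Y₁} = X_{Ỹ₂} · L · X_{Ỹ₁} holds, where e^{Ỹ₁} = e^{Y₁}(1+e^{−2Z})⁻¹ and e^{Ỹ₂} = e^{Y₂}(1+e^{2Z}) (i.e. Ỹ₁ = Y₁ − log(1+e^{−2Z}), Ỹ₂ = Y₂ + log(1+e^{2Z})). -/

import Mathlib

open Matrix Real

noncomputable def Xm (Z : ℝ) : Matrix (Fin 2) (Fin 2) ℝ :=
  !![0, -Real.exp (Z / 2); Real.exp (-Z / 2), 0]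

def Fm : Matrix (Fin 2) (Fin 2) ℝ := !![0, 1; -1, 0]
def Lm : Matrix (Fin 2) (Fin 2) ℝ := !![0, 1; -1, -1]

theorem pending_flip_identity_1 (Y₁ Y₂ Z : ℝ) :
    Xm Y₂ * Lm * Xm Z * Fm * Xm Z * Lm * Xm Y₁ =
      Xm (Y₂ + Real.log (1 + Real.exp (2 * Z))) * Lm *
        Xm (Y₁ - Real.log (1 + Real.exp (-2 * Z))) := by
  have hs : (0:ℝ) < 1 + Real.exp (2 * Z) := by positivity
  set u := Real.exp (Real.log (1 + Real.exp (2 * Z)) / 2) with hu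
  have hu2 : u * u = 1 + Real.exp (2 * Z) := by
    rw [hu, ← Real.exp_add, add_halves, Real.exp_log hs]
  have hv : Real.exp (Real.log (1 + Real.exp (-(2 * Z))) / 2) = Real.exp (-Z) * u := by
    have h1 : 1 + Real.exp (-(2 * Z)) = Real.exp (-(2*Z)) * (1 + Real.exp (2 * Z)) := by
      rw [mul_add, mul_one, ← Real.exp_add, neg_add_cancel, Real.exp_zero, add_comm]
    rw [h1, Real.log_mul (by positivity) hs.ne', Real.log_exp, hu, ← Real.exp_add]
    ring_nf
  have hw : Real.exp (-Real.log (1 + Real.exp (2 * Z)) / 2) * u = 1 := by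
    rw [hu, ← Real.exp_add]; ring_nf; exact Real.exp_zero
  have hmz : Real.exp (-Z) = Real.exp (-Z/2) * Real.exp (-Z/2) := by
    rw [← Real.exp_add]; ring_nf
  have h2z : Real.exp (2*Z) = Real.exp (Z/2) * Real.exp (Z/2) * Real.exp (Z/2) * Real.exp (Z/2) := by
    rw [← Real.exp_add, ← Real.exp_add, ← Real.exp_add]; ring_nf
  have hbb : Real.exp (Y₁/2) * Real.exp (-Y₁/2) = 1 := by
    rw [← Real.exp_add]; ring_nf; exact Real.exp_zero
  have hpq : Real.exp (Z/2) * Real.exp (-Z/2) = 1 := by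
    rw [← Real.exp_add]; ring_nf; exact Real.exp_zero
  ext i j
  fin_cases i <;> fin_cases j <;>
    simp [Xm, Fm, Lm, Matrix.mul_apply, Fin.sum_univ_succ, add_div, sub_div,
      Real.exp_add, Real.exp_sub, hv] <;>
    (try rw [← hu]) <;>
    field_simp
  · simp only [neg_div] at hbb hpq hmz hw
    linear_combination (Real.exp (-(Z/2))^2 + Real.exp (Z/2)^2) * hbb - Real.exp (-Z) * hu2
      - (1 + Real.exp (2*Z)) * hmz - Real.exp (-(Z/2))^2 * h2z - Real.exp (Z/2)^2 * (1 + Real.exp (Z/2) * Real.exp (-(Z/2))) * hpq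
  · have hu0 : u ≠ 0 := by rw [hu]; positivity
    rw [div_self hu0]
    simp only [neg_div] at hbb hpq hmz hw
    linear_combination Real.exp (Z/2)^2 * hmz + (Real.exp (Z/2) * Real.exp (-(Z/2)) + 1) * hpq
  · simp only [neg_div] at hbb hpq hmz hw
    linear_combination Real.exp (-(Z/2))^2 * hbb - hmz - Real.exp (-Z) * hw
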